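/- arXiv:1310.5763 — 11 statements merged into one kernel-verified Lean document; each statement's English description precedes it below -/
import Mathlib

section
/- If a collection of sets Ω₁,…,Ω_m in a normed space is uniformly [q]-regular at a common point x̄, then it is [q]-subregular at x̄. -/
variable {X : Type*} [NormedAddCommGroup X] [NormedSpace ℝ X]

/-- `[q]`-subregularity of the collection `Ω` at `x₀`. -/
def SubReg {m : ℕ} (q : ℝ) (Ω : Fin m → Set X) (x₀ : X) : Prop :=
  ∃ α > (0:ℝ), ∃ δ > (0:ℝ), ∀ ρ ∈ Set.Ioo (0:ℝ) δ, ∀ y ∈ Metric.closedBall x₀ δ,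
    (∀ i, ∃ w ∈ Ω i, ‖y - w‖ ≤ (α * ρ) ^ (1 / q)) →
    ∃ z, (∀ i, z ∈ Ω i) ∧ ‖y - z‖ ≤ ρ

/-- Uniform `[q]`-regularity of the collection `Ω` at `x₀`. -/
def UnifReg {m : ℕ} (q : ℝ) (Ω : Fin m → Set X) (x₀ : X) : Prop :=
  ∃ α > (0:ℝ), ∃ δ > (0:ℝ), ∀ ρ ∈ Set.Ioo (0:ℝ) δ, ∀ ω x : Fin m → X,
    (∀ i, ω i ∈ Ω i ∧ ω i ∈ Metric.closedBall x₀ δ) →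
    (∀ i, ‖x i‖ ≤ (α * ρ) ^ (1 / q)) →
    ∃ z, ‖z‖ ≤ ρ ∧ ∀ i, z + ω i + x i ∈ Ω i

theorem unifReg_implies_subReg {m : ℕ} (q : ℝ) (hq0 : 0 < q) (hq1 : q ≤ 1)
    (Ω : Fin m → Set X) (x₀ : X) (hx₀ : ∀ i, x₀ ∈ Ω i)
    (h : UnifReg q Ω x₀) : SubReg q Ω x₀ := by
  obtain ⟨α, hα, δ, hδ, H⟩ := h
  have hδ2 : (0:ℝ) < δ / 2 := by linarith
  set δ' : ℝ := min (δ / 2) ((δ / 2) ^ q / α) with hδ'def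
  have hδ'pos : 0 < δ' := lt_min hδ2 (div_pos (Real.rpow_pos_of_pos hδ2 q) hα)
  refine ⟨α, hα, δ', hδ'pos, ?_⟩
  intro ρ hρ y hy hw
  -- key bound : (α * ρ)^(1/q) ≤ δ/2
  have hρδ : ρ < δ' := hρ.2
  have hkey : (α * ρ) ^ (1 / q) ≤ δ / 2 := by
    have h1 : α * ρ ≤ (δ / 2) ^ q := by
      have : ρ ≤ (δ / 2) ^ q / α := le_of_lt (lt_of_lt_of_le hρδ (min_le_right _ _))
      calc α * ρ ≤ α * ((δ / 2) ^ q / α) := by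
            exact mul_le_mul_of_nonneg_left this (le_of_lt hα)
        _ = (δ / 2) ^ q := by field_simp
    have h2 : (α * ρ) ^ (1 / q) ≤ ((δ / 2) ^ q) ^ (1 / q) :=
      Real.rpow_le_rpow (mul_nonneg hα.le hρ.1.le) h1 (by positivity)
    calc (α * ρ) ^ (1 / q) ≤ ((δ / 2) ^ q) ^ (1 / q) := h2
      _ = (δ / 2) ^ (q * (1 / q)) := by rw [← Real.rpow_mul (le_of_lt hδ2)]
      _ = δ / 2 := by
          rw [mul_one_div_cancel (ne_of_gt hq0), Real.rpow_one]
  choose w hw1 hw2 using hw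
  have hρIoo : ρ ∈ Set.Ioo (0:ℝ) δ := ⟨hρ.1, by
    have := lt_of_lt_of_le hρδ (min_le_left _ _); linarith⟩
  have hcond1 : ∀ i, w i ∈ Ω i ∧ w i ∈ Metric.closedBall x₀ δ := by
    intro i
    refine ⟨hw1 i, ?_⟩
    have hyx₀ : ‖y - x₀‖ ≤ δ' := by
      simpa [Metric.mem_closedBall, dist_eq_norm] using hy
    have hwy : ‖w i - y‖ ≤ (α * ρ) ^ (1 / q) := by
      rw [norm_sub_rev]; exact hw2 i
    have hmain : ‖w i - x₀‖ ≤ δ := by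
      calc ‖w i - x₀‖ = ‖(w i - y) + (y - x₀)‖ := by abel_nf
        _ ≤ ‖w i - y‖ + ‖y - x₀‖ := norm_add_le _ _
        _ ≤ δ / 2 + δ / 2 := by
            have h3 : δ' ≤ δ / 2 := min_le_left _ _
            exact add_le_add (le_trans hwy hkey) (le_trans hyx₀ h3)
        _ = δ := by ring
    simpa [Metric.mem_closedBall, dist_eq_norm] using hmain
  have hcond2 : ∀ i, ‖(fun i => y - w i) i‖ ≤ (α * ρ) ^ (1 / q) := fun i => hw2 i
  obtain ⟨z, hz, hzin⟩ := H ρ hρIoo w (fun i => y - w i) hcond1 hcond2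
  refine ⟨z + y, fun i => ?_, ?_⟩
  · have := hzin i
    simpa [add_assoc, add_comm, add_left_comm] using this
  · have heq : y - (z + y) = -z := by abel
    rw [heq, norm_neg]; exact hz
end

section
/- Let Ω₁,…,Ω_m be closed subsets of a normed space, x̄ ∈ ⋂ᵢ Ωᵢ, and q > 1. If the collection is [q]-subregular at x̄, then x̄ is an interior point of ⋂ᵢ Ωᵢ. -/
variable {X : Type*} [NormedAddCommGroup X] [NormedSpace ℝ X]

theorem subReg_gt_one_implies_interior {m : ℕ} (q : ℝ) (hq : 1 < q)
    (Ω : Fin m → Set X) (hΩ : ∀ i, IsClosed (Ω i)) (x₀ : X) (hx₀ : ∀ i, x₀ ∈ Ω i)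
    (h : SubReg q Ω x₀) : x₀ ∈ interior (⋂ i, Ω i) := by
  obtain ⟨α, hα, δ, hδ, hreg⟩ := h
  have hq0 : (0:ℝ) < q := by linarith
  have hq1 : (0:ℝ) < q - 1 := by linarith
  set ρ0 : ℝ := min (δ/2) ((α/2) ^ (q-1)⁻¹) with hρ0def
  have hρ0pos : 0 < ρ0 := lt_min (by linarith) (Real.rpow_pos_of_pos (by linarith) _)
  have hρ0δ : ρ0 < δ := lt_of_le_of_lt (min_le_left _ _) (by linarith)
  have hρ0α : ρ0 ^ (q-1) ≤ α / 2 := by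
    calc ρ0 ^ (q-1) ≤ ((α/2) ^ (q-1)⁻¹) ^ (q-1) :=
          Real.rpow_le_rpow hρ0pos.le (min_le_right _ _) hq1.le
      _ = α / 2 := Real.rpow_inv_rpow (by linarith) (ne_of_gt hq1)
  set r : ℝ := min δ ((α * ρ0) ^ (1/q)) with hrdef
  have hrpos : 0 < r :=
    lt_min hδ (Real.rpow_pos_of_pos (mul_pos hα hρ0pos) _)
  -- key geometric facts about ρ n = ρ0 * (1/2)^n
  have hρpos : ∀ n : ℕ, 0 < ρ0 * (1/2:ℝ)^n := fun n =>
    mul_pos hρ0pos (by positivity)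
  have hρle : ∀ n : ℕ, ρ0 * (1/2:ℝ)^n ≤ ρ0 := fun n => by
    have : (1/2:ℝ)^n ≤ 1 := pow_le_one₀ (by norm_num) (by norm_num)
    nlinarith [hρ0pos]
  have hρδ : ∀ n : ℕ, ρ0 * (1/2:ℝ)^n ∈ Set.Ioo (0:ℝ) δ := fun n =>
    ⟨hρpos n, lt_of_le_of_lt (hρle n) hρ0δ⟩
  -- main claim: every y in the ball of radius r is approximable
  have main : ∀ y ∈ Metric.ball x₀ r, ∀ n : ℕ,
      ∃ z, (∀ i, z ∈ Ω i) ∧ ‖y - z‖ ≤ ρ0 * (1/2:ℝ)^n := by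
    intro y hy
    have hyδ : y ∈ Metric.closedBall x₀ δ := by
      have := Metric.mem_ball.mp hy
      exact Metric.mem_closedBall.mpr (le_trans this.le (min_le_left _ _))
    intro n
    induction n with
    | zero =>
      have h0 : ∀ i, ∃ w ∈ Ω i, ‖y - w‖ ≤ (α * ρ0) ^ (1 / q) := by
        intro i
        refine ⟨x₀, hx₀ i, ?_⟩
        have := Metric.mem_ball.mp hy
        rw [dist_eq_norm] at this
        exact le_trans this.le (min_le_right _ _)
      obtain ⟨z, hz, hz'⟩ := hreg ρ0 ⟨hρ0pos, hρ0δ⟩ y hyδ h0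
      exact ⟨z, hz, by simpa using hz'⟩
    | succ n ih =>
      obtain ⟨z, hz, hz'⟩ := ih
      set t : ℝ := (1/2:ℝ)^n with htdef
      have htpos : 0 < t := by positivity
      have hρt : 0 < ρ0 * t := hρpos n
      -- (ρ0 t)^q ≤ α * (ρ0 * (1/2)^(n+1))
      have key : (ρ0 * t) ^ q ≤ α * (ρ0 * (1/2:ℝ)^(n+1)) := by
        have e1 : (ρ0 * t) ^ q = (ρ0 * t) ^ (q-1) * (ρ0 * t) := by
          have h' := Real.rpow_add hρt (q-1) 1
          rw [Real.rpow_one] at h'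
          rw [show q - 1 + 1 = q by ring] at h'
          exact h'
        have e2 : (ρ0 * t) ^ (q-1) ≤ ρ0 ^ (q-1) :=
          Real.rpow_le_rpow hρt.le (hρle n) hq1.le
        have e3 : (ρ0 * t) ^ (q-1) ≤ α / 2 := le_trans e2 hρ0α
        have e4 : α * (ρ0 * (1/2:ℝ)^(n+1)) = (α/2) * (ρ0 * t) := by
          rw [pow_succ]; ring
        rw [e1, e4]
        exact mul_le_mul_of_nonneg_right e3 hρt.le
      have hstep : ρ0 * t ≤ (α * (ρ0 * (1/2:ℝ)^(n+1))) ^ (1/q) := by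
        have : ρ0 * t = ((ρ0 * t) ^ q) ^ (1/q) := by
          rw [one_div, Real.rpow_rpow_inv hρt.le (ne_of_gt hq0)]
        rw [this]
        exact Real.rpow_le_rpow (Real.rpow_nonneg hρt.le _) key
          (by positivity)
      have hw : ∀ i, ∃ w ∈ Ω i, ‖y - w‖ ≤ (α * (ρ0 * (1/2:ℝ)^(n+1))) ^ (1 / q) :=
        fun i => ⟨z, hz i, le_trans hz' hstep⟩
      exact hreg _ (hρδ (n+1)) y hyδ hw
  -- conclude: ball x₀ r ⊆ ⋂ i, Ω i
  have hball : Metric.ball x₀ r ⊆ ⋂ i, Ω i := by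
    intro y hy
    choose z hz hz' using main y hy
    have hlim : Filter.Tendsto z Filter.atTop (nhds y) := by
      rw [tendsto_iff_dist_tendsto_zero]
      have h1 : Filter.Tendsto (fun n : ℕ => ρ0 * (1/2:ℝ)^n) Filter.atTop (nhds 0) := by
        simpa using tendsto_const_nhds.mul
          (tendsto_pow_atTop_nhds_zero_of_lt_one (by norm_num : (0:ℝ) ≤ 1/2)
            (by norm_num : (1/2:ℝ) < 1))
      refine squeeze_zero (fun n => dist_nonneg) (fun n => ?_) h1
      rw [dist_eq_norm, ← norm_neg]
      simpa using hz' n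
    exact Set.mem_iInter.mpr fun i =>
      (hΩ i).mem_of_tendsto hlim (Filter.Eventually.of_forall fun n => hz n i)
  exact mem_interior.mpr ⟨Metric.ball x₀ r, hball, Metric.isOpen_ball,
    Metric.mem_ball_self hrpos⟩
end

section
/- Let Ω₁,…,Ω_m be closed subsets of a normed space, x̄ ∈ ⋂ᵢ Ωᵢ, and q > 1. Suppose the collection is [q]-semiregular at x̄ and for every i with x̄ ∈ bd Ωᵢ the set of primal proximal normals N^P_{Ωᵢ}(x̄) := {u ∈ X ∣ ∃ r > 0, d(x̄ + ru, Ωᵢ) = r‖u‖} contains a nonzero element. Then x̄ ∈ int ⋂ᵢ Ωᵢ. -/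
variable {X : Type*} [NormedAddCommGroup X] [NormedSpace ℝ X]

def SemiReg {m : ℕ} (q : ℝ) (Ω : Fin m → Set X) (x₀ : X) : Prop :=
  ∃ α > (0:ℝ), ∃ δ > (0:ℝ), ∀ ρ ∈ Set.Ioo (0:ℝ) δ, ∀ x : Fin m → X,
    (∀ i, ‖x i‖ ≤ (α * ρ) ^ (1 / q)) →
    ∃ y ∈ Metric.closedBall x₀ ρ, ∀ i, y + x i ∈ Ω i

/-- The set of primal proximal normals to `Ω` at `x₀`. -/
def ProxNormal (Ω : Set X) (x₀ : X) : Set X :=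
  {u : X | ∃ r > (0:ℝ), Metric.infDist (x₀ + r • u) Ω = r * ‖u‖}

theorem semiReg_gt_one_implies_interior {m : ℕ} (q : ℝ) (hq : 1 < q)
    (Ω : Fin m → Set X) (hΩ : ∀ i, IsClosed (Ω i)) (x₀ : X) (hx₀ : ∀ i, x₀ ∈ Ω i)
    (h : SemiReg q Ω x₀)
    (hN : ∀ i, x₀ ∈ frontier (Ω i) → ∃ u ∈ ProxNormal (Ω i) x₀, u ≠ 0) :
    x₀ ∈ interior (⋂ i, Ω i) := by
  have key : ∀ i, x₀ ∈ interior (Ω i) := by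
    intro i
    by_contra hint
    have hfr : x₀ ∈ frontier (Ω i) := by
      rw [(hΩ i).frontier_eq]; exact ⟨hx₀ i, hint⟩
    obtain ⟨u, ⟨r, hr, hru⟩, hu0⟩ := hN i hfr
    obtain ⟨α, hα, δ, hδ, hsemi⟩ := h
    have hun : (0:ℝ) < ‖u‖ := norm_pos_iff.mpr hu0
    have hq1 : (0:ℝ) < q - 1 := by linarith
    have hq0 : (0:ℝ) < q := by linarith
    have hrupos : (0:ℝ) < r * ‖u‖ := mul_pos hr hun
    set ρ : ℝ := (min δ (min (α ^ (1/(q-1))) ((r*‖u‖) ^ q / α))) / 2 with hρdef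
    have hρpos : 0 < ρ := by
      apply div_pos _ two_pos
      exact lt_min hδ (lt_min (Real.rpow_pos_of_pos hα _)
        (div_pos (Real.rpow_pos_of_pos hrupos _) hα))
    have hρδ : ρ < δ := by
      have h1 : min δ (min (α ^ (1/(q-1))) ((r*‖u‖) ^ q / α)) ≤ δ := min_le_left _ _
      have := hρpos
      rw [hρdef] at *
      linarith
    have hρα : ρ < α ^ (1/(q-1)) := by
      have h1 : min δ (min (α ^ (1/(q-1))) ((r*‖u‖) ^ q / α)) ≤ α ^ (1/(q-1)) :=
        (min_le_right _ _).trans (min_le_left _ _)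
      have := hρpos
      rw [hρdef] at *
      linarith
    have hρr : ρ ≤ (r*‖u‖)^q / α := by
      have h1 : min δ (min (α ^ (1/(q-1))) ((r*‖u‖) ^ q / α)) ≤ (r*‖u‖)^q / α :=
        (min_le_right _ _).trans (min_le_right _ _)
      have := hρpos
      rw [hρdef] at *
      linarith
    set c : ℝ := (α * ρ) ^ (1/q) with hc
    have hcpos : 0 < c := Real.rpow_pos_of_pos (mul_pos hα hρpos) _
    have hsplit : ρ ^ (q-1) * ρ ^ (1:ℝ) = ρ ^ q := by
      rw [← Real.rpow_add hρpos]
      congr 1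
      ring
    have hcρ : ρ < c := by
      have h1 : ρ ^ (q-1) < α := by
        calc ρ ^ (q-1) < (α ^ (1/(q-1))) ^ (q-1) :=
              Real.rpow_lt_rpow hρpos.le hρα hq1
          _ = α := by
              rw [← Real.rpow_mul hα.le, one_div_mul_cancel hq1.ne', Real.rpow_one]
      have h2 : ρ ^ q < α * ρ := by
        rw [← hsplit, Real.rpow_one]
        exact mul_lt_mul_of_pos_right h1 hρpos
      calc ρ = (ρ ^ q) ^ (1/q) := by
              rw [← Real.rpow_mul hρpos.le, mul_one_div, div_self hq0.ne', Real.rpow_one]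
        _ < c := Real.rpow_lt_rpow (Real.rpow_nonneg hρpos.le _) h2 (by positivity)
    have hcr : c ≤ r * ‖u‖ := by
      have h1 : α * ρ ≤ (r*‖u‖)^q := by
        rw [mul_comm]
        exact (le_div_iff₀ hα).mp hρr
      calc c ≤ ((r*‖u‖)^q)^(1/q) :=
            Real.rpow_le_rpow (by positivity) h1 (by positivity)
        _ = r*‖u‖ := by
            rw [← Real.rpow_mul hrupos.le, mul_one_div, div_self hq0.ne', Real.rpow_one]
    set t : ℝ := c / ‖u‖ with htdef
    have ht : 0 < t := div_pos hcpos hun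
    have htc : t * ‖u‖ = c := div_mul_cancel₀ c hun.ne'
    have htr : t ≤ r := by
      rw [htdef, div_le_iff₀ hun]
      exact hcr
    set x : Fin m → X := fun j => if j = i then t • u else 0 with hxdef
    have hx : ∀ j, ‖x j‖ ≤ (α * ρ) ^ (1/q) := by
      intro k
      by_cases hk : k = i
      · have hxk : x k = t • u := by simp [hxdef, hk]
        rw [hxk, norm_smul, Real.norm_eq_abs, abs_of_pos ht, htc]
      · have hxk : x k = 0 := by simp [hxdef, hk]
        rw [hxk, norm_zero]
        exact hcpos.le
    obtain ⟨y, hy, hmem⟩ := hsemi ρ ⟨hρpos, hρδ⟩ x hx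
    have hyi : y + t • u ∈ Ω i := by
      have := hmem i
      simpa [hxdef] using this
    have hupper : Metric.infDist (x₀ + t • u) (Ω i) ≤ ρ := by
      calc Metric.infDist (x₀ + t • u) (Ω i) ≤ dist (x₀ + t • u) (y + t • u) :=
            Metric.infDist_le_dist_of_mem hyi
        _ = dist x₀ y := dist_add_right x₀ y (t • u)
        _ ≤ ρ := by rw [dist_comm]; exact Metric.mem_closedBall.mp hy
    have hlow : t * ‖u‖ ≤ Metric.infDist (x₀ + t • u) (Ω i) := by
      have htri := Metric.infDist_le_infDist_add_dist
        (x := x₀ + r • u) (y := x₀ + t • u) (s := Ω i)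
      rw [hru] at htri
      have hd : dist (x₀ + r • u) (x₀ + t • u) = (r - t) * ‖u‖ := by
        rw [dist_eq_norm]
        have heq : (x₀ + r • u) - (x₀ + t • u) = (r - t) • u := by module
        rw [heq, norm_smul, Real.norm_eq_abs, abs_of_nonneg (by linarith)]
      rw [hd] at htri
      nlinarith
    rw [htc] at hlow
    linarith
  rw [mem_interior_iff_mem_nhds, Filter.iInter_mem]
  exact fun i => mem_interior_iff_mem_nhds.mp (key i)
end

section
/- A collection Ω₁,…,Ω_m is [q]-semiregular at x̄ if and only if there exist γ, δ > 0 such that γ·d(x̄, ⋂ᵢ(Ωᵢ − xᵢ)) ≤ (max_{1≤i≤m} ‖xᵢ‖)^q for all x₁,…,x_m ∈ δ𝔹 (metric [q]-semiregularity). -/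
variable {X : Type*} [NormedAddCommGroup X] [NormedSpace ℝ X]

/-- Theorem 2.1(i): `[q]`-semiregularity is equivalent to metric `[q]`-semiregularity.
The distance to the (possibly empty) intersection of the translated sets is taken in `ℝ≥0∞`. -/
theorem semiReg_iff_metric {m : ℕ} (hm : 0 < m) (q : ℝ) (hq0 : 0 < q) (hq1 : q ≤ 1)
    (Ω : Fin m → Set X) (x₀ : X) (hx₀ : ∀ i, x₀ ∈ Ω i) :
    SemiReg q Ω x₀ ↔
      ∃ γ > (0:ℝ), ∃ δ > (0:ℝ), ∀ x : Fin m → X, (∀ i, ‖x i‖ ≤ δ) →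
        ENNReal.ofReal γ * EMetric.infEdist x₀ {y : X | ∀ i, y + x i ∈ Ω i}
          ≤ ENNReal.ofReal ((⨆ i, ‖x i‖) ^ q) := by
  haveI : Nonempty (Fin m) := ⟨⟨0, hm⟩⟩
  constructor
  · rintro ⟨α, hα, δ, hδ, H⟩
    refine ⟨α, hα, (α * (δ / 2)) ^ (1 / q),
      Real.rpow_pos_of_pos (by positivity) _, ?_⟩
    intro x hx
    set M := ⨆ i, ‖x i‖ with hM
    have hle : ∀ i, ‖x i‖ ≤ M := fun i =>
      le_ciSup (f := fun j => ‖x j‖) (Set.Finite.bddAbove (Set.finite_range _)) i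
    have hMnn : 0 ≤ M := le_trans (norm_nonneg (x ⟨0, hm⟩)) (hle ⟨0, hm⟩)
    rcases eq_or_lt_of_le hMnn with h0 | hMpos
    · have hx0 : ∀ i, x i = 0 := fun i =>
        norm_eq_zero.mp (le_antisymm (h0 ▸ hle i) (norm_nonneg _))
      have hmem : x₀ ∈ {y : X | ∀ i, y + x i ∈ Ω i} := fun i => by
        rw [hx0 i, add_zero]; exact hx₀ i
      rw [show EMetric.infEdist x₀ _ = 0 from EMetric.infEdist_zero_of_mem hmem, mul_zero]
      exact zero_le
    · set ρ := M ^ q / α with hρ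
      have hρpos : 0 < ρ := div_pos (Real.rpow_pos_of_pos hMpos q) hα
      have hαρ : α * ρ = M ^ q := by rw [hρ, mul_div_cancel₀ _ hα.ne']
      have hMle : M ≤ (α * (δ / 2)) ^ (1 / q) := ciSup_le hx
      have hMq : M ^ q ≤ α * (δ / 2) := by
        calc M ^ q ≤ ((α * (δ / 2)) ^ (1 / q)) ^ q :=
              Real.rpow_le_rpow hMnn hMle hq0.le
          _ = α * (δ / 2) := by
              rw [one_div, Real.rpow_inv_rpow (by positivity) hq0.ne']
      have hρδ : ρ < δ := by
        have h1 : ρ ≤ δ / 2 := by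
          rw [hρ, div_le_iff₀ hα] at *
          nlinarith
        linarith
      obtain ⟨y, hy, hyS⟩ := H ρ ⟨hρpos, hρδ⟩ x (fun i => by
        rw [hαρ, one_div, Real.rpow_rpow_inv hMnn hq0.ne']
        exact hle i)
      have h1 : EMetric.infEdist x₀ {y : X | ∀ i, y + x i ∈ Ω i}
          ≤ ENNReal.ofReal ρ := by
        refine le_trans (EMetric.infEdist_le_edist_of_mem hyS) ?_
        rw [edist_dist]
        exact ENNReal.ofReal_le_ofReal
          (by rw [dist_comm]; exact Metric.mem_closedBall.mp hy)
      calc ENNReal.ofReal α * EMetric.infEdist x₀ {y : X | ∀ i, y + x i ∈ Ω i}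
          ≤ ENNReal.ofReal α * ENNReal.ofReal ρ := mul_le_mul_right h1 _
        _ = ENNReal.ofReal (α * ρ) := (ENNReal.ofReal_mul hα.le).symm
        _ = ENNReal.ofReal (M ^ q) := by rw [hαρ]
  · rintro ⟨γ, hγ, δ, hδ, H⟩
    refine ⟨γ / 2, by positivity, δ ^ q / (γ / 2), by positivity, ?_⟩
    intro ρ hρ x hx
    have hρ0 : 0 < ρ := hρ.1
    set M := ⨆ i, ‖x i‖ with hM
    have hle : ∀ i, ‖x i‖ ≤ M := fun i =>
      le_ciSup (f := fun j => ‖x j‖) (Set.Finite.bddAbove (Set.finite_range _)) i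
    have hMnn : 0 ≤ M := le_trans (norm_nonneg (x ⟨0, hm⟩)) (hle ⟨0, hm⟩)
    have hγρ : γ / 2 * ρ ≤ δ ^ q := by
      have := hρ.2
      rw [lt_div_iff₀ (by positivity)] at this
      nlinarith
    have hxδ : ∀ i, ‖x i‖ ≤ δ := fun i => by
      refine le_trans (hx i) ?_
      calc (γ / 2 * ρ) ^ (1 / q) ≤ (δ ^ q) ^ (1 / q) :=
            Real.rpow_le_rpow (by positivity) hγρ (by positivity)
        _ = δ := by rw [one_div, Real.rpow_rpow_inv hδ.le hq0.ne']
    have hMq : M ^ q ≤ γ / 2 * ρ := by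
      have hMle : M ≤ (γ / 2 * ρ) ^ (1 / q) := ciSup_le hx
      calc M ^ q ≤ ((γ / 2 * ρ) ^ (1 / q)) ^ q :=
            Real.rpow_le_rpow hMnn hMle hq0.le
        _ = γ / 2 * ρ := by
            rw [one_div, Real.rpow_inv_rpow (by positivity) hq0.ne']
    have h2 : ENNReal.ofReal γ *
        EMetric.infEdist x₀ {y : X | ∀ i, y + x i ∈ Ω i}
        < ENNReal.ofReal γ * ENNReal.ofReal ρ := by
      calc ENNReal.ofReal γ * EMetric.infEdist x₀ {y : X | ∀ i, y + x i ∈ Ω i}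
          ≤ ENNReal.ofReal (M ^ q) := H x hxδ
        _ ≤ ENNReal.ofReal (γ / 2 * ρ) := ENNReal.ofReal_le_ofReal hMq
        _ < ENNReal.ofReal (γ * ρ) := by
            rw [ENNReal.ofReal_lt_ofReal_iff (by positivity)]
            nlinarith [hρ.1]
        _ = ENNReal.ofReal γ * ENNReal.ofReal ρ := ENNReal.ofReal_mul hγ.le
    have h3 : EMetric.infEdist x₀ {y : X | ∀ i, y + x i ∈ Ω i}
        < ENNReal.ofReal ρ := by
      rw [ENNReal.mul_lt_mul_iff_right (by simp [hγ]) ENNReal.ofReal_ne_top] at h2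
      exact h2
    replace h3 := EMetric.infEdist_lt_iff.mp h3
    obtain ⟨y, hyS, hyd⟩ := h3
    exact ⟨y, Metric.mem_closedBall.mpr
      (by rw [dist_comm]; exact (edist_lt_ofReal.mp hyd).le), hyS⟩
end

section
/- A collection Ω₁,…,Ω_m is [q]-subregular at x̄ if and only if there exist γ, δ > 0 such that γ·d(x, ⋂ᵢ Ωᵢ) ≤ max_{1≤i≤m} d(x,Ωᵢ)^q for all x ∈ B_δ(x̄) (metric [q]-subregularity). -/
variable {X : Type*} [NormedAddCommGroup X] [NormedSpace ℝ X]

/-- Theorem 2.1(ii): `[q]`-subregularity is equivalent to metric `[q]`-subregularity. -/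
theorem subReg_iff_metric {m : ℕ} (hm : 0 < m) (q : ℝ) (hq0 : 0 < q) (hq1 : q ≤ 1)
    (Ω : Fin m → Set X) (x₀ : X) (hx₀ : ∀ i, x₀ ∈ Ω i) :
    SubReg q Ω x₀ ↔
      ∃ γ > (0:ℝ), ∃ δ > (0:ℝ), ∀ x ∈ Metric.closedBall x₀ δ,
        γ * Metric.infDist x (⋂ i, Ω i) ≤ (⨆ i, Metric.infDist x (Ω i)) ^ q := by
  haveI : Nonempty (Fin m) := ⟨⟨0, hm⟩⟩
  have hq0' : q ≠ 0 := ne_of_gt hq0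
  have hiq : (0:ℝ) < 1 / q := by positivity
  have hInter : x₀ ∈ ⋂ i, Ω i := Set.mem_iInter.2 hx₀
  have hIne : (⋂ i, Ω i).Nonempty := ⟨x₀, hInter⟩
  -- (x ^ (1/q)) ^ q = x for 0 ≤ x
  have key1 : ∀ x : ℝ, 0 ≤ x → (x ^ (1 / q)) ^ q = x := by
    intro x hx
    rw [← Real.rpow_mul hx, one_div, inv_mul_cancel₀ hq0', Real.rpow_one]
  have key2 : ∀ x : ℝ, 0 ≤ x → (x ^ q) ^ (1 / q) = x := by
    intro x hx
    rw [← Real.rpow_mul hx, one_div, mul_inv_cancel₀ hq0', Real.rpow_one]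
  constructor
  · rintro ⟨α, hα, δ, hδ, H⟩
    set δ' : ℝ := min δ ((α * δ / 2) ^ (1 / q) / 2) with hδ'def
    have hαδ : (0:ℝ) < α * δ / 2 := by positivity
    have hδ'pos : 0 < δ' := lt_min hδ (by positivity)
    refine ⟨α, hα, δ', hδ'pos, fun x hx => ?_⟩
    have hxδ : x ∈ Metric.closedBall x₀ δ :=
      Metric.closedBall_subset_closedBall (min_le_left _ _) hx
    set s : ℝ := ⨆ i, Metric.infDist x (Ω i) with hs
    have hbdd : BddAbove (Set.range fun i => Metric.infDist x (Ω i)) :=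
      Set.Finite.bddAbove (Set.finite_range _)
    have hle : ∀ i, Metric.infDist x (Ω i) ≤ s := fun i => le_ciSup hbdd i
    have hs0 : 0 ≤ s := le_trans Metric.infDist_nonneg (hle ⟨0, hm⟩)
    have hsδ' : s ≤ δ' := by
      refine ciSup_le fun i => ?_
      calc Metric.infDist x (Ω i) ≤ dist x x₀ := Metric.infDist_le_dist_of_mem (hx₀ i)
        _ ≤ δ' := Metric.mem_closedBall.1 hx
    refine le_of_forall_gt_imp_ge_of_dense fun c hc => ?_
    have hc0 : 0 < c := lt_of_le_of_lt (Real.rpow_nonneg hs0 q) hc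
    have hsc : s < c ^ (1 / q) := by
      have := Real.rpow_lt_rpow (Real.rpow_nonneg hs0 q) hc hiq
      rwa [key2 s hs0] at this
    set ε : ℝ := min δ' ((c ^ (1 / q) - s) / 2) with hεdef
    have hεpos : 0 < ε := lt_min hδ'pos (by linarith)
    have hsε : 0 < s + ε := by linarith
    set ρ : ℝ := (s + ε) ^ q / α with hρdef
    have hρpos : 0 < ρ := by
      apply div_pos (Real.rpow_pos_of_pos hsε q) hα
    have hρδ : ρ < δ := by
      have h1 : s + ε ≤ 2 * δ' := by
        have := min_le_left δ' ((c ^ (1 / q) - s) / 2)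
        linarith
      have h2 : 2 * δ' ≤ (α * δ / 2) ^ (1 / q) := by
        have := min_le_right δ ((α * δ / 2) ^ (1 / q) / 2)
        have : δ' ≤ (α * δ / 2) ^ (1 / q) / 2 := this
        linarith
      have h3 : (s + ε) ^ q ≤ α * δ / 2 := by
        calc (s + ε) ^ q ≤ ((α * δ / 2) ^ (1 / q)) ^ q :=
              Real.rpow_le_rpow (le_of_lt hsε) (h1.trans h2) hq0.le
          _ = α * δ / 2 := key1 _ hαδ.le
      rw [hρdef, div_lt_iff₀ hα]
      calc (s + ε) ^ q ≤ α * δ / 2 := h3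
        _ < δ * α := by nlinarith
    have hαρ : α * ρ = (s + ε) ^ q := by
      rw [hρdef]; field_simp
    obtain ⟨z, hz, hzρ⟩ := H ρ ⟨hρpos, hρδ⟩ x hxδ (fun i => by
      have : Metric.infDist x (Ω i) < s + ε := lt_of_le_of_lt (hle i) (by linarith)
      obtain ⟨w, hw, hwd⟩ := (Metric.infDist_lt_iff ⟨x₀, hx₀ i⟩).1 this
      refine ⟨w, hw, ?_⟩
      rw [hαρ, key2 _ hsε.le, ← dist_eq_norm]
      exact hwd.le)
    have hdz : Metric.infDist x (⋂ i, Ω i) ≤ ρ := by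
      refine le_trans (Metric.infDist_le_dist_of_mem (Set.mem_iInter.2 hz)) ?_
      rw [dist_eq_norm]; exact hzρ
    calc α * Metric.infDist x (⋂ i, Ω i) ≤ α * ρ := by nlinarith
      _ = (s + ε) ^ q := hαρ
      _ ≤ (c ^ (1 / q)) ^ q := by
          apply Real.rpow_le_rpow hsε.le ?_ hq0.le
          have := min_le_right δ' ((c ^ (1 / q) - s) / 2)
          linarith
      _ = c := key1 _ hc0.le
  · rintro ⟨γ, hγ, δ, hδ, H⟩
    refine ⟨γ / 2, by positivity, δ, hδ, fun ρ hρ y hy hw => ?_⟩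
    have hsup : (⨆ i, Metric.infDist y (Ω i)) ≤ (γ / 2 * ρ) ^ (1 / q) := by
      refine ciSup_le fun i => ?_
      obtain ⟨w, hwΩ, hwd⟩ := hw i
      calc Metric.infDist y (Ω i) ≤ dist y w := Metric.infDist_le_dist_of_mem hwΩ
        _ ≤ (γ / 2 * ρ) ^ (1 / q) := by rw [dist_eq_norm]; exact hwd
    have hγρ : (0:ℝ) ≤ γ / 2 * ρ := by
      have := hρ.1; positivity
    have hsup0 : 0 ≤ ⨆ i, Metric.infDist y (Ω i) :=
      le_trans Metric.infDist_nonneg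
        (le_ciSup (f := fun i => Metric.infDist y (Ω i))
          (Set.Finite.bddAbove (Set.finite_range _)) ⟨0, hm⟩)
    have hsq : (⨆ i, Metric.infDist y (Ω i)) ^ q ≤ γ / 2 * ρ := by
      calc (⨆ i, Metric.infDist y (Ω i)) ^ q ≤ ((γ / 2 * ρ) ^ (1 / q)) ^ q :=
            Real.rpow_le_rpow hsup0 hsup hq0.le
        _ = γ / 2 * ρ := key1 _ hγρ
    have hd : Metric.infDist y (⋂ i, Ω i) < ρ := by
      have h1 : γ * Metric.infDist y (⋂ i, Ω i) ≤ γ / 2 * ρ := le_trans (H y hy) hsq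
      have := hρ.1
      nlinarith
    obtain ⟨z, hz, hzd⟩ := (Metric.infDist_lt_iff hIne).1 hd
    exact ⟨z, Set.mem_iInter.1 hz, by rw [← dist_eq_norm]; exact hzd.le⟩
end

section
/- A collection Ω₁,…,Ω_m is uniformly [q]-regular at x̄ if and only if there exist γ, δ > 0 such that γ·d(x, ⋂ᵢ(Ωᵢ − xᵢ)) ≤ max_{1≤i≤m} d(x + xᵢ, Ωᵢ)^q for all x ∈ B_δ(x̄) and all x₁,…,x_m ∈ δ𝔹 (metric uniform [q]-regularity). -/
variable {X : Type*} [NormedAddCommGroup X] [NormedSpace ℝ X]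

/-- Theorem 2.1(iii): uniform `[q]`-regularity is equivalent to metric uniform
`[q]`-regularity. The distance to the (possibly empty) intersection of translated sets
is taken in `ℝ≥0∞`. -/
theorem unifReg_iff_metric {m : ℕ} (hm : 0 < m) (q : ℝ) (hq0 : 0 < q) (hq1 : q ≤ 1)
    (Ω : Fin m → Set X) (x₀ : X) (hx₀ : ∀ i, x₀ ∈ Ω i) :
    UnifReg q Ω x₀ ↔
      ∃ γ > (0:ℝ), ∃ δ > (0:ℝ), ∀ x ∈ Metric.closedBall x₀ δ, ∀ xs : Fin m → X,
        (∀ i, ‖xs i‖ ≤ δ) →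
        ENNReal.ofReal γ * EMetric.infEdist x {y : X | ∀ i, y + xs i ∈ Ω i}
          ≤ ENNReal.ofReal ((⨆ i, Metric.infDist (x + xs i) (Ω i)) ^ q) := by
  have hne : Nonempty (Fin m) := ⟨⟨0, hm⟩⟩
  have hqne : q ≠ 0 := ne_of_gt hq0
  constructor
  · -- UnifReg → metric
    rintro ⟨α, hα, δ, hδ, H⟩
    set t := (α * δ / 2) ^ (1/q) with ht
    have ht0 : 0 < t := Real.rpow_pos_of_pos (by positivity) _
    set δ' := min (δ/5) (t/3) with hδ'def
    have hδ'0 : 0 < δ' := lt_min (by linarith) (by linarith)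
    have hδ'5 : δ' ≤ δ/5 := min_le_left _ _
    have hδ't : 3 * δ' ≤ t := by
      have := min_le_right (δ/5) (t/3); linarith
    refine ⟨α, hα, δ', hδ'0, ?_⟩
    intro x hx xs hxs
    have hxx₀ : dist x x₀ ≤ δ' := Metric.mem_closedBall.mp hx
    set S := {y : X | ∀ i, y + xs i ∈ Ω i} with hS
    set r := ⨆ i, Metric.infDist (x + xs i) (Ω i) with hr
    have hr0 : 0 ≤ r := Real.iSup_nonneg fun i => Metric.infDist_nonneg
    have hrle : ∀ i, Metric.infDist (x + xs i) (Ω i) ≤ r :=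
      fun i => le_ciSup (f := fun i => Metric.infDist (x + xs i) (Ω i))
        (Set.Finite.bddAbove (Set.finite_range _)) i
    have hdx : ∀ i, dist (x + xs i) x₀ ≤ 2 * δ' := by
      intro i
      calc dist (x + xs i) x₀ = ‖(x - x₀) + xs i‖ := by
            rw [dist_eq_norm]; congr 1; abel
        _ ≤ ‖x - x₀‖ + ‖xs i‖ := norm_add_le _ _
        _ ≤ δ' + δ' := by
            refine add_le_add ?_ (hxs i)
            rw [← dist_eq_norm]; exact hxx₀
        _ = 2 * δ' := by ring
    have hr2 : r ≤ 2 * δ' := by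
      apply ciSup_le
      intro i
      exact le_trans (Metric.infDist_le_dist_of_mem (hx₀ i)) (hdx i)
    have key : ∀ ε ∈ Set.Ioc (0:ℝ) δ',
        EMetric.infEdist x S ≤ ENNReal.ofReal ((r + ε) ^ q / α) := by
      rintro ε ⟨hε0, hεδ⟩
      have hrε : 0 < r + ε := by linarith
      have hpick : ∀ i, ∃ w ∈ Ω i, dist (x + xs i) w < r + ε := by
        intro i
        rw [← Metric.infDist_lt_iff ⟨x₀, hx₀ i⟩]
        exact lt_of_le_of_lt (hrle i) (by linarith)
      choose ω hωΩ hωd using hpick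
      set ρ := (r + ε) ^ q / α with hρ
      have hρ0 : 0 < ρ := div_pos (Real.rpow_pos_of_pos hrε _) hα
      have hαρ : α * ρ = (r + ε) ^ q := by
        rw [hρ, mul_div_assoc', mul_div_cancel_left₀ _ hα.ne']
      have hρδ : ρ < δ := by
        have h3 : r + ε ≤ 3 * δ' := by linarith
        have h4 : (r + ε) ^ q ≤ t ^ q :=
          Real.rpow_le_rpow hrε.le (le_trans h3 hδ't) hq0.le
        have htq : t ^ q = α * δ / 2 := by
          rw [ht, one_div, Real.rpow_inv_rpow (by positivity) hqne]
        rw [hρ, div_lt_iff₀ hα]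
        nlinarith
      have hnorm : ∀ i, ‖x + xs i - ω i‖ ≤ (α * ρ) ^ (1/q) := by
        intro i
        rw [hαρ, one_div, Real.rpow_rpow_inv hrε.le hqne, ← dist_eq_norm]
        exact (hωd i).le
      have hωball : ∀ i, ω i ∈ Ω i ∧ ω i ∈ Metric.closedBall x₀ δ := by
        intro i
        refine ⟨hωΩ i, Metric.mem_closedBall.mpr ?_⟩
        calc dist (ω i) x₀ ≤ dist (ω i) (x + xs i) + dist (x + xs i) x₀ :=
              dist_triangle _ _ _
          _ ≤ (r + ε) + 2 * δ' := by
              refine add_le_add ?_ (hdx i)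
              rw [dist_comm]; exact (hωd i).le
          _ ≤ 5 * δ' := by linarith
          _ ≤ δ := by linarith
      obtain ⟨z, hz, hzΩ⟩ := H ρ ⟨hρ0, hρδ⟩ ω (fun i => x + xs i - ω i) hωball hnorm
      have hmem : x + z ∈ S := by
        intro i
        have := hzΩ i
        have heq : z + ω i + (x + xs i - ω i) = (x + z) + xs i := by abel
        rwa [heq] at this
      calc EMetric.infEdist x S ≤ edist x (x + z) :=
            EMetric.infEdist_le_edist_of_mem hmem
        _ = ENNReal.ofReal ‖z‖ := by
            rw [edist_dist, dist_self_add_right]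
        _ ≤ ENNReal.ofReal ρ := ENNReal.ofReal_le_ofReal hz
    have hfin : EMetric.infEdist x S ≠ ⊤ :=
      (lt_of_le_of_lt (key δ' ⟨hδ'0, le_refl _⟩) ENNReal.ofReal_lt_top).ne
    set D := (EMetric.infEdist x S).toReal with hD
    have hDbound : ∀ ε ∈ Set.Ioc (0:ℝ) δ', α * D ≤ (r + ε) ^ q := by
      rintro ε hε
      have h1 : D ≤ (r + ε) ^ q / α := by
        refine ENNReal.toReal_le_of_le_ofReal ?_ (key ε hε)
        have : 0 < r + ε := by linarith [hε.1]
        positivity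
      calc α * D ≤ α * ((r + ε) ^ q / α) := by
            exact mul_le_mul_of_nonneg_left h1 hα.le
        _ = (r + ε) ^ q := by field_simp
    have hlim : α * D ≤ r ^ q := by
      have c1 : ContinuousAt (fun y : ℝ => y ^ q) r :=
        Real.continuousAt_rpow_const r q (Or.inr hq0.le)
      have c2 : Filter.Tendsto (fun ε : ℝ => r + ε) (nhdsWithin 0 (Set.Ioi 0)) (nhds r) := by
        have : Filter.Tendsto (fun ε : ℝ => r + ε) (nhds 0) (nhds (r + 0)) :=
          (continuous_const.add continuous_id).tendsto 0
        rw [add_zero] at this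
        exact this.mono_left nhdsWithin_le_nhds
      have htend : Filter.Tendsto (fun ε : ℝ => (r + ε) ^ q)
          (nhdsWithin 0 (Set.Ioi 0)) (nhds (r ^ q)) := c1.tendsto.comp c2
      refine ge_of_tendsto htend ?_
      filter_upwards [Ioc_mem_nhdsGT_of_mem ⟨le_refl (0:ℝ), hδ'0⟩] with ε hε
      exact hDbound ε hε
    calc ENNReal.ofReal α * EMetric.infEdist x S
        = ENNReal.ofReal (α * D) := by
          rw [ENNReal.ofReal_mul hα.le, hD, ENNReal.ofReal_toReal hfin]
      _ ≤ ENNReal.ofReal (r ^ q) := ENNReal.ofReal_le_ofReal hlim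
  · -- metric → UnifReg
    rintro ⟨γ, hγ, δ, hδ, H⟩
    set α := γ / 2 with hαdef
    have hα : 0 < α := by rw [hαdef]; linarith
    set δ' := min (δ/2) ((δ/2) ^ q / α) with hδ'def
    have hδ'0 : 0 < δ' := lt_min (by linarith) (by positivity)
    refine ⟨α, hα, δ', hδ'0, ?_⟩
    rintro ρ ⟨hρ0, hρδ'⟩ ω x hω hx
    have hαρ : α * ρ ≤ (δ/2) ^ q := by
      have h1 : ρ ≤ (δ/2) ^ q / α := le_of_lt (lt_of_lt_of_le hρδ' (min_le_right _ _))
      calc α * ρ ≤ α * ((δ/2) ^ q / α) := mul_le_mul_of_nonneg_left h1 hα.le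
        _ = (δ/2) ^ q := by field_simp
    have hxi : ∀ i, ‖x i‖ ≤ δ/2 := by
      intro i
      calc ‖x i‖ ≤ (α * ρ) ^ (1/q) := hx i
        _ ≤ ((δ/2) ^ q) ^ (1/q) := by
            apply Real.rpow_le_rpow (by positivity) hαρ
            positivity
        _ = δ/2 := by
            rw [one_div, Real.rpow_rpow_inv (by linarith) hqne]
    set xs := fun i => ω i + x i - x₀ with hxsdef
    have hxs : ∀ i, ‖xs i‖ ≤ δ := by
      intro i
      calc ‖xs i‖ = ‖(ω i - x₀) + x i‖ := by rw [hxsdef]; congr 1; abel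
        _ ≤ ‖ω i - x₀‖ + ‖x i‖ := norm_add_le _ _
        _ ≤ δ/2 + δ/2 := by
            refine add_le_add ?_ (hxi i)
            rw [← dist_eq_norm]
            exact le_trans (Metric.mem_closedBall.mp (hω i).2) (min_le_left _ _)
        _ = δ := by ring
    have hmain := H x₀ (Metric.mem_closedBall.mpr (by simp [hδ.le])) xs hxs
    set S := {y : X | ∀ i, y + xs i ∈ Ω i} with hS
    have hsup : (⨆ i, Metric.infDist (x₀ + xs i) (Ω i)) ^ q ≤ α * ρ := by
      have h1 : (⨆ i, Metric.infDist (x₀ + xs i) (Ω i)) ≤ (α * ρ) ^ (1/q) := by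
        apply ciSup_le
        intro i
        have heq : x₀ + xs i = ω i + x i := by simp only [hxsdef]; abel
        rw [heq]
        calc Metric.infDist (ω i + x i) (Ω i) ≤ dist (ω i + x i) (ω i) :=
              Metric.infDist_le_dist_of_mem (hω i).1
          _ = ‖x i‖ := by rw [dist_comm, dist_self_add_right]
          _ ≤ (α * ρ) ^ (1/q) := hx i
      calc (⨆ i, Metric.infDist (x₀ + xs i) (Ω i)) ^ q ≤ ((α * ρ) ^ (1/q)) ^ q := by
            apply Real.rpow_le_rpow (Real.iSup_nonneg fun i => Metric.infDist_nonneg) h1 hq0.le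
        _ = α * ρ := by rw [one_div, Real.rpow_inv_rpow (by positivity) hqne]
    have hlt : EMetric.infEdist x₀ S < ENNReal.ofReal ρ := by
      have h2 : ENNReal.ofReal γ * EMetric.infEdist x₀ S ≤
          ENNReal.ofReal γ * ENNReal.ofReal (ρ/2) := by
        calc ENNReal.ofReal γ * EMetric.infEdist x₀ S
            ≤ ENNReal.ofReal ((⨆ i, Metric.infDist (x₀ + xs i) (Ω i)) ^ q) := hmain
          _ ≤ ENNReal.ofReal (α * ρ) := ENNReal.ofReal_le_ofReal hsup
          _ = ENNReal.ofReal γ * ENNReal.ofReal (ρ/2) := by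
              rw [← ENNReal.ofReal_mul hγ.le]
              congr 1
              rw [hαdef]; ring
      have h3 : EMetric.infEdist x₀ S ≤ ENNReal.ofReal (ρ/2) :=
        (ENNReal.mul_le_mul_iff_right (ENNReal.ofReal_pos.mpr hγ).ne' ENNReal.ofReal_ne_top).mp h2
      exact lt_of_le_of_lt h3 (ENNReal.ofReal_lt_ofReal_iff hρ0 |>.mpr (by linarith))
    obtain ⟨y, hyS, hyd⟩ := EMetric.infEdist_lt_iff.mp hlt
    refine ⟨y - x₀, ?_, ?_⟩
    · have h : dist x₀ y < ρ := edist_lt_ofReal.mp hyd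
      rw [← dist_eq_norm, dist_comm]
      exact h.le
    · intro i
      have := hyS i
      have heq : y + xs i = (y - x₀) + ω i + x i := by rw [hxsdef]; abel
      rwa [heq] at this
end

section
/- In ℝ² with the Euclidean norm, let Ω₁ = {(u,v) : v ≥ 0} and Ω₂ = {(u,v) : v ≤ u²}, and x̄ = (0,0). Then the collection {Ω₁, Ω₂} is not metrically semiregular at x̄ (i.e., not [1]-semiregular), but it is metrically [1/2]-semiregular at x̄: there exist γ, δ > 0 such that γ·d(x̄, (Ω₁ − x₁) ∩ (Ω₂ − x₂)) ≤ max(‖x₁‖, ‖x₂‖)^{1/2} for all x₁, x₂ ∈ δ𝔹. -/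
open Metric

local notation "E" => EuclideanSpace ℝ (Fin 2)

/-- Metric `[q]`-semiregularity of the pair `{Ω₁, Ω₂}` at `0`, with the distance to the
(possibly empty) intersection of translated sets taken in `ℝ≥0∞` (so `d(x,∅) = ∞`). -/
def MetSemiReg (q : ℝ) (Ω₁ Ω₂ : Set E) : Prop :=
  ∃ γ > (0:ℝ), ∃ δ > (0:ℝ), ∀ x₁ x₂ : E, ‖x₁‖ ≤ δ → ‖x₂‖ ≤ δ →
    ENNReal.ofReal γ * EMetric.infEdist (0:E) {y : E | y + x₁ ∈ Ω₁ ∧ y + x₂ ∈ Ω₂}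
      ≤ ENNReal.ofReal ((max ‖x₁‖ ‖x₂‖) ^ q)

lemma abs_apply_le_norm (y : E) (i : Fin 2) : |y i| ≤ ‖y‖ := by
  rw [EuclideanSpace.norm_eq]
  calc |y i| = Real.sqrt (‖y i‖^2) := by
        rw [Real.sqrt_sq (norm_nonneg _)]; simp [Real.norm_eq_abs]
    _ ≤ _ := Real.sqrt_le_sqrt
        (Finset.single_le_sum (f := fun j => ‖y j‖^2) (fun j _ => by positivity)
          (Finset.mem_univ i))

lemma edist_zero_eq (y : E) : edist (0:E) y = ENNReal.ofReal ‖y‖ := by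
  rw [edist_dist, dist_zero_left]

theorem semiReg_example :
    ¬ MetSemiReg 1 {p : E | 0 ≤ p 1} {p : E | p 1 ≤ (p 0) ^ 2} ∧
    MetSemiReg ((1:ℝ)/2) {p : E | 0 ≤ p 1} {p : E | p 1 ≤ (p 0) ^ 2} := by
  constructor
  · rintro ⟨γ, hγ, δ, hδ, h⟩
    set ε : ℝ := min δ (γ^2/4) with hεdef
    have hε0 : 0 < ε := lt_min hδ (by positivity)
    have key := h 0 (EuclideanSpace.single 1 ε) (by simp [le_of_lt hδ])
      (by rw [EuclideanSpace.norm_single, Real.norm_eq_abs, abs_of_pos hε0]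
          exact min_le_left _ _)
    have hmax : max ‖(0:E)‖ ‖(EuclideanSpace.single 1 ε : E)‖ = ε := by
      rw [EuclideanSpace.norm_single, Real.norm_eq_abs, abs_of_pos hε0, norm_zero,
        max_eq_right (le_of_lt hε0)]
    rw [hmax, Real.rpow_one] at key
    have hlb : ENNReal.ofReal (Real.sqrt ε) ≤ EMetric.infEdist (0:E)
        {y : E | y + 0 ∈ {p : E | 0 ≤ p 1} ∧
          y + EuclideanSpace.single 1 ε ∈ {p : E | p 1 ≤ (p 0) ^ 2}} := by
      rw [EMetric.infEdist, Metric.le_infEDist]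
      intro y hy
      obtain ⟨h1, h2⟩ := hy
      simp only [Set.mem_setOf_eq, PiLp.add_apply, EuclideanSpace.single_apply] at h1 h2
      rw [edist_zero_eq]
      apply ENNReal.ofReal_le_ofReal
      have hy0 : Real.sqrt ε ≤ |y 0| := by
        rw [← Real.sqrt_sq_eq_abs]
        apply Real.sqrt_le_sqrt
        simp at h1 h2
        nlinarith
      exact le_trans hy0 (abs_apply_le_norm y 0)
    have hchain : ENNReal.ofReal (γ * Real.sqrt ε) ≤ ENNReal.ofReal ε := by
      rw [ENNReal.ofReal_mul (le_of_lt hγ)]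
      exact le_trans (mul_le_mul_right hlb _) key
    rw [ENNReal.ofReal_le_ofReal_iff (le_of_lt hε0)] at hchain
    have hs : Real.sqrt ε ≤ γ/2 := by
      rw [show γ/2 = Real.sqrt ((γ/2)^2) from (Real.sqrt_sq (by positivity)).symm]
      exact Real.sqrt_le_sqrt (by nlinarith [min_le_right δ (γ^2/4)])
    have hs0 : 0 < Real.sqrt ε := Real.sqrt_pos.mpr hε0
    nlinarith [Real.sq_sqrt (le_of_lt hε0)]
  · refine ⟨1/4, by norm_num, 1, one_pos, ?_⟩
    intro x₁ x₂ h1 h2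
    set m := max ‖x₁‖ ‖x₂‖ with hmdef
    have hm0 : 0 ≤ m := le_trans (norm_nonneg x₁) (le_max_left _ _)
    have hm1 : m ≤ 1 := max_le h1 h2
    have ha : |x₁ 1| ≤ m := le_trans (abs_apply_le_norm x₁ 1) (le_max_left _ _)
    have hb : |x₂ 1| ≤ m := le_trans (abs_apply_le_norm x₂ 1) (le_max_right _ _)
    have hc : |x₂ 0| ≤ m := le_trans (abs_apply_le_norm x₂ 0) (le_max_right _ _)
    set t := max 0 (-(x₁ 1)) with htdef
    have ht0 : 0 ≤ t := le_max_left _ _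
    have htm : t ≤ m := le_trans (max_le (abs_nonneg _) (neg_le_abs _)) ha
    set s := Real.sqrt (max 0 (t + x₂ 1)) with hsdef
    have hs0 : 0 ≤ s := Real.sqrt_nonneg _
    have hssq : s^2 = max 0 (t + x₂ 1) := Real.sq_sqrt (le_max_left _ _)
    have hs2m : s ≤ Real.sqrt (2*m) := by
      apply Real.sqrt_le_sqrt
      have : t + x₂ 1 ≤ 2*m := by
        have := abs_le.mp hb
        linarith
      exact max_le (by linarith) this
    set y : E := EuclideanSpace.single 0 (s - x₂ 0) + EuclideanSpace.single 1 t with hydef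
    have hmem : y ∈ {y : E | y + x₁ ∈ {p : E | 0 ≤ p 1} ∧
        y + x₂ ∈ {p : E | p 1 ≤ (p 0) ^ 2}} := by
      constructor
      · show (0:ℝ) ≤ (y + x₁) 1
        simp only [hydef, PiLp.add_apply, EuclideanSpace.single_apply]
        have : -(x₁ 1) ≤ t := le_max_right _ _
        simp
        linarith
      · show (y + x₂) 1 ≤ ((y + x₂) 0)^2
        simp only [hydef, PiLp.add_apply, EuclideanSpace.single_apply]
        have h' : t + x₂ 1 ≤ s^2 := hssq ▸ le_max_right _ _
        simp
        nlinarith [h']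
      -- done
    have hnorm : ‖y‖ ≤ 4 * Real.sqrt m := by
      have h1' : ‖y‖ ≤ |s - x₂ 0| + |t| := by
        calc ‖y‖ ≤ ‖(EuclideanSpace.single 0 (s - x₂ 0) : E)‖ +
            ‖(EuclideanSpace.single 1 t : E)‖ := norm_add_le _ _
          _ = |s - x₂ 0| + |t| := by
            rw [EuclideanSpace.norm_single, EuclideanSpace.norm_single,
              Real.norm_eq_abs, Real.norm_eq_abs]
      have h2' : |s - x₂ 0| ≤ s + |x₂ 0| := by
        calc |s - x₂ 0| ≤ |s| + |x₂ 0| := abs_sub _ _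
          _ = s + |x₂ 0| := by rw [abs_of_nonneg hs0]
      have hmsqrt : m ≤ Real.sqrt m := by
        calc m = Real.sqrt (m^2) := (Real.sqrt_sq hm0).symm
          _ ≤ Real.sqrt m := Real.sqrt_le_sqrt (by nlinarith)
      have h2m : Real.sqrt (2*m) ≤ 2 * Real.sqrt m := by
        rw [show (2:ℝ)*m = 2*m from rfl, Real.sqrt_mul (by norm_num) m]
        have : Real.sqrt 2 ≤ 2 := by
          have h4 : Real.sqrt 2 ≤ Real.sqrt 4 := Real.sqrt_le_sqrt (by norm_num)
          rwa [show (4:ℝ) = 2^2 by norm_num, Real.sqrt_sq (by norm_num : (0:ℝ) ≤ 2)] at h4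
        nlinarith [Real.sqrt_nonneg m]
      rw [abs_of_nonneg ht0] at h1'
      nlinarith
    calc ENNReal.ofReal (1/4) * EMetric.infEdist (0:E) {y : E | y + x₁ ∈ {p : E | 0 ≤ p 1} ∧
          y + x₂ ∈ {p : E | p 1 ≤ (p 0) ^ 2}}
        ≤ ENNReal.ofReal (1/4) * ENNReal.ofReal ‖y‖ := by
          apply mul_le_mul_right
          rw [← edist_zero_eq]
          exact EMetric.infEdist_le_edist_of_mem hmem
      _ = ENNReal.ofReal (1/4 * ‖y‖) := (ENNReal.ofReal_mul (by norm_num)).symm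
      _ ≤ ENNReal.ofReal (m ^ ((1:ℝ)/2)) := by
          apply ENNReal.ofReal_le_ofReal
          rw [← Real.sqrt_eq_rpow]
          linarith
end

section
/- In ℝ² with the Euclidean norm, let Ω₁ = {(t,t²) : t ∈ ℝ} and Ω₂ = {(t,−t²) : t ∈ ℝ}, and x̄ = (0,0). Then the collection {Ω₁, Ω₂} is not metrically subregular at x̄ (i.e., there are no γ, δ > 0 with γ·d(x, Ω₁∩Ω₂) ≤ max(d(x,Ω₁), d(x,Ω₂)) for all x ∈ B_δ(x̄)), but it is metrically [1/2]-subregular: there exist γ, δ > 0 such that γ·d(x, Ω₁∩Ω₂) ≤ max(d(x,Ω₁), d(x,Ω₂))^{1/2} for all x ∈ B_δ(x̄). -/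
open Metric

local notation "E" => EuclideanSpace ℝ (Fin 2)

/-- Metric `[q]`-subregularity of the pair `{Ω₁, Ω₂}` at `0`. -/
def MetSubReg (q : ℝ) (Ω₁ Ω₂ : Set E) : Prop :=
  ∃ γ > (0:ℝ), ∃ δ > (0:ℝ), ∀ x ∈ Metric.closedBall (0:E) δ,
    γ * Metric.infDist x (Ω₁ ∩ Ω₂) ≤ (max (Metric.infDist x Ω₁) (Metric.infDist x Ω₂)) ^ q

private def vec (a b : ℝ) : E := WithLp.toLp 2 ![a, b]

private lemma le_infDist' {x : E} {s : Set E} (hs : s.Nonempty) {c : ℝ}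
    (h : ∀ y ∈ s, c ≤ dist x y) : c ≤ infDist x s := by
  by_contra hlt
  obtain ⟨y, hy, hd⟩ := (infDist_lt_iff hs).1 (not_le.1 hlt)
  exact absurd hd (not_lt.2 (h y hy))

private lemma dist_pair (a b c d : ℝ) :
    dist (vec a b) (vec c d) = Real.sqrt ((a - c) ^ 2 + (b - d) ^ 2) := by
  rw [EuclideanSpace.dist_eq, Fin.sum_univ_two]
  simp [vec, Real.dist_eq, sq_abs]

private lemma fst_le (a b c d : ℝ) : |a - c| ≤ dist (vec a b) (vec c d) := by
  rw [dist_pair, ← Real.sqrt_sq_eq_abs]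
  exact Real.sqrt_le_sqrt (by nlinarith [sq_nonneg (b - d)])

private lemma snd_le (a b c d : ℝ) : |b - d| ≤ dist (vec a b) (vec c d) := by
  rw [dist_pair, ← Real.sqrt_sq_eq_abs]
  exact Real.sqrt_le_sqrt (by nlinarith [sq_nonneg (a - c)])

private lemma norm_pair (a b : ℝ) : ‖vec a b‖ = Real.sqrt (a ^ 2 + b ^ 2) := by
  rw [EuclideanSpace.norm_eq, Fin.sum_univ_two]
  simp [vec, sq_abs]

private lemma zero_eq : (0 : E) = WithLp.toLp 2 ![0, 0] := by
  ext i; fin_cases i <;> simp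

private lemma inter_eq :
    ({p : E | ∃ t : ℝ, p = ![t, t ^ 2]} ∩ {p : E | ∃ t : ℝ, p = ![t, -t ^ 2]}) = {(0:E)} := by
  ext p
  constructor
  · rintro ⟨⟨t, hp⟩, ⟨s, hs⟩⟩
    rw [hp] at hs
    have h0 : t = s := by have := congrFun hs 0; simpa using this
    have h1 : t ^ 2 = -s ^ 2 := by have := congrFun hs 1; simpa using this
    have ht : t = 0 := by nlinarith [sq_nonneg t, sq_nonneg s]
    subst ht
    simp only [Set.mem_singleton_iff]
    ext i; fin_cases i <;> simp [hp]
  · rintro rfl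
    refine ⟨⟨0, ?_⟩, ⟨0, ?_⟩⟩ <;> rw [zero_eq] <;> norm_num

private lemma key_bound {a b : ℝ} (hb : 0 ≤ b) (ha1 : a ^ 2 ≤ 1) (hb1 : b ≤ 1) (t : ℝ) :
    max b (a ^ 2 / 4) ≤ dist (vec a b) (vec t (-t ^ 2)) := by
  have habs : |a| ≤ 1 := abs_le_one_iff_mul_self_le_one.2 (by nlinarith [sq_abs a])
  refine max_le ?_ ?_
  · refine le_trans ?_ (snd_le a b t (-t^2))
    rw [abs_of_nonneg (by nlinarith [sq_nonneg t])]
    nlinarith [sq_nonneg t]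
  · rcases le_total (|a| / 2) (|a - t|) with h | h
    · refine le_trans ?_ (fst_le a b t (-t^2))
      nlinarith [sq_abs a, abs_nonneg a]
    · have htt : |a| / 2 ≤ |t| := by
        linarith [abs_sub_abs_le_abs_sub a t]
      refine le_trans ?_ (snd_le a b t (-t^2))
      rw [abs_of_nonneg (by nlinarith [sq_nonneg t])]
      nlinarith [sq_abs t, sq_abs a, abs_nonneg a, abs_nonneg t, sq_nonneg (|t| - |a|/2)]

private lemma key_bound' {a b : ℝ} (hb : b ≤ 0) (ha1 : a ^ 2 ≤ 1) (hb1 : -1 ≤ b) (t : ℝ) :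
    max (-b) (a ^ 2 / 4) ≤ dist (vec a b) (vec t (t ^ 2)) := by
  have habs : |a| ≤ 1 := abs_le_one_iff_mul_self_le_one.2 (by nlinarith [sq_abs a])
  refine max_le ?_ ?_
  · refine le_trans ?_ (snd_le a b t (t^2))
    rw [abs_of_nonpos (by nlinarith [sq_nonneg t])]
    nlinarith [sq_nonneg t]
  · rcases le_total (|a| / 2) (|a - t|) with h | h
    · refine le_trans ?_ (fst_le a b t (t^2))
      nlinarith [sq_abs a, abs_nonneg a]
    · have htt : |a| / 2 ≤ |t| := by
        linarith [abs_sub_abs_le_abs_sub a t]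
      refine le_trans ?_ (snd_le a b t (t^2))
      rw [abs_of_nonpos (by nlinarith [sq_nonneg t])]
      nlinarith [sq_abs t, sq_abs a, abs_nonneg a, abs_nonneg t, sq_nonneg (|t| - |a|/2)]

theorem subReg_example :
    ¬ MetSubReg 1 {p : E | ∃ t : ℝ, p = ![t, t ^ 2]} {p : E | ∃ t : ℝ, p = ![t, -t ^ 2]} ∧
    MetSubReg ((1:ℝ)/2) {p : E | ∃ t : ℝ, p = ![t, t ^ 2]} {p : E | ∃ t : ℝ, p = ![t, -t ^ 2]} := by
  have hinter := inter_eq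
  have hne1 : ({p : E | ∃ t : ℝ, p = ![t, t ^ 2]}).Nonempty := ⟨vec 0 0, ⟨0, by norm_num [vec]⟩⟩
  have hne2 : ({p : E | ∃ t : ℝ, p = ![t, -t ^ 2]}).Nonempty := ⟨vec 0 0, ⟨0, by norm_num [vec]⟩⟩
  constructor
  · -- not subregular with q = 1
    rintro ⟨γ, hγ, δ, hδ, H⟩
    have ht0' : 0 < min δ (γ / 2) := lt_min hδ (by linarith)
    obtain ⟨t, htd, htg, ht0⟩ : ∃ t : ℝ, t ≤ δ ∧ t ≤ γ / 2 ∧ 0 < t :=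
      ⟨min δ (γ / 2), min_le_left _ _, min_le_right _ _, ht0'⟩
    have hnx : ‖vec t 0‖ = t := by
      rw [norm_pair]; norm_num; exact Real.sqrt_sq ht0.le
    have hxball : vec t 0 ∈ Metric.closedBall (0:E) δ := by
      rw [mem_closedBall, dist_zero_right, hnx]; exact htd
    have h1 : infDist (vec t 0) {p : E | ∃ s : ℝ, p = ![s, s ^ 2]} ≤ t ^ 2 := by
      have hm : vec t (t^2) ∈ {p : E | ∃ s : ℝ, p = ![s, s ^ 2]} := ⟨t, rfl⟩
      refine (infDist_le_dist_of_mem hm).trans ?_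
      rw [dist_pair]; norm_num
      rw [Real.sqrt_sq (by positivity)]
    have h2 : infDist (vec t 0) {p : E | ∃ s : ℝ, p = ![s, -s ^ 2]} ≤ t ^ 2 := by
      have hm : vec t (-t^2) ∈ {p : E | ∃ s : ℝ, p = ![s, -s ^ 2]} := ⟨t, rfl⟩
      refine (infDist_le_dist_of_mem hm).trans ?_
      rw [dist_pair]; norm_num
      rw [Real.sqrt_sq (by positivity)]
    have hH := H _ hxball
    rw [hinter, infDist_singleton, dist_zero_right, hnx, Real.rpow_one] at hH
    have : γ * t ≤ t ^ 2 := hH.trans (max_le h1 h2)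
    nlinarith
  · -- subregular with q = 1/2
    refine ⟨1/3, by norm_num, 1, by norm_num, fun x hx => ?_⟩
    rw [hinter, infDist_singleton, dist_zero_right]
    obtain ⟨a, b, hab⟩ : ∃ a b : ℝ, x = vec a b :=
      ⟨x 0, x 1, by ext i; fin_cases i <;> rfl⟩
    subst hab
    rw [norm_pair]
    have hxle : Real.sqrt (a ^ 2 + b ^ 2) ≤ 1 := by
      rw [mem_closedBall, dist_zero_right, norm_pair] at hx; exact hx
    have hab1 : a ^ 2 + b ^ 2 ≤ 1 := by
      nlinarith [Real.sq_sqrt (by positivity : (0:ℝ) ≤ a ^ 2 + b ^ 2),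
        Real.sqrt_nonneg (a ^ 2 + b ^ 2)]
    have ha1 : a ^ 2 ≤ 1 := by nlinarith [sq_nonneg b]
    have hb2 : b ^ 2 ≤ 1 := by nlinarith [sq_nonneg a]
    have key : (a ^ 2 + b ^ 2) / 6 ≤
        max (infDist (vec a b) {p : E | ∃ t : ℝ, p = ![t, t ^ 2]})
            (infDist (vec a b) {p : E | ∃ t : ℝ, p = ![t, -t ^ 2]}) := by
      rcases le_total 0 b with hb | hb
      · have hble : b ≤ 1 := by nlinarith
        have hd2 : max b (a ^ 2 / 4) ≤ infDist (vec a b) {p : E | ∃ t : ℝ, p = ![t, -t ^ 2]} := by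
          refine le_infDist' hne2 ?_
          rintro y ⟨t, ht⟩
          obtain rfl : y = vec t (-t ^ 2) := WithLp.ofLp_injective 2 ht
          exact key_bound hb ha1 hble t
        refine le_trans ?_ (hd2.trans (le_max_right _ _))
        rcases le_total b (a ^ 2 / 2) with h | h
        · refine le_trans ?_ (le_max_right _ _); nlinarith
        · refine le_trans ?_ (le_max_left _ _); nlinarith
      · have hble : -1 ≤ b := by nlinarith
        have hd1 : max (-b) (a ^ 2 / 4) ≤ infDist (vec a b) {p : E | ∃ t : ℝ, p = ![t, t ^ 2]} := by
          refine le_infDist' hne1 ?_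
          rintro y ⟨t, ht⟩
          obtain rfl : y = vec t (t ^ 2) := WithLp.ofLp_injective 2 ht
          exact key_bound' hb ha1 hble t
        refine le_trans ?_ (hd1.trans (le_max_left _ _))
        rcases le_total (-b) (a ^ 2 / 2) with h | h
        · refine le_trans ?_ (le_max_right _ _); nlinarith
        · refine le_trans ?_ (le_max_left _ _); nlinarith
    rw [← Real.sqrt_eq_rpow]
    rw [show (1:ℝ)/3 * Real.sqrt (a ^ 2 + b ^ 2) = Real.sqrt (a ^ 2 + b ^ 2) / 3 by ring]
    apply (Real.le_sqrt (by positivity) (le_trans infDist_nonneg (le_max_left _ _))).2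
    calc (Real.sqrt (a ^ 2 + b ^ 2) / 3) ^ 2 = (a ^ 2 + b ^ 2) / 9 := by
          rw [div_pow, Real.sq_sqrt (by positivity)]; ring
      _ ≤ (a ^ 2 + b ^ 2) / 6 := by nlinarith [sq_nonneg a, sq_nonneg b]
      _ ≤ _ := key
end

section
/- Let X be a normed space and equip Xᵐ with the max-norm. For x̂ = (x₁,…,x_m) ∈ Xᵐ, the duality mapping satisfies: J(x₁,…,x_m) = {(x₁*,…,x_m*) ∈ (X*)ᵐ : Σᵢ‖xᵢ*‖ = 1, and for each i, either xᵢ* = 0, or (‖xᵢ‖ = max_j ‖x_j‖ and xᵢ* ∈ ‖xᵢ*‖·J(xᵢ))}. -/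
variable {X : Type*} [NormedAddCommGroup X] [NormedSpace ℝ X] {m : ℕ}

/-- The normalized duality mapping of `X`. -/
def dualityMap (y : X) : Set (StrongDual ℝ X) :=
  {p | ‖p‖ = 1 ∧ p y = ‖y‖}

/-- Proposition 4.2: description of the duality mapping on `Xᵐ` with the max-norm,
identifying the dual of `Xᵐ` with `(X*)ᵐ` equipped with the sum norm and the pairing
`⟨(xᵢ*),(xᵢ)⟩ = Σᵢ ⟨xᵢ*, xᵢ⟩`.  The norm `‖xh‖` of `xh : Fin m → X` is the max-norm
`⨆ i, ‖xh i‖` (the `Pi` sup-norm). -/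
theorem dualityMap_pi (xh : Fin m → X) (p : Fin m → StrongDual ℝ X) :
    ((∑ i, ‖p i‖ = 1) ∧ (∑ i, p i (xh i)) = ‖xh‖) ↔
      (∑ i, ‖p i‖ = 1) ∧ ∀ i, p i = 0 ∨
        (‖xh i‖ = ‖xh‖ ∧ ∃ u ∈ dualityMap (xh i), p i = ‖p i‖ • u) := by
  constructor
  · rintro ⟨hs, hp⟩
    refine ⟨hs, ?_⟩
    have hle : ∀ i ∈ Finset.univ, p i (xh i) ≤ ‖p i‖ * ‖xh‖ := by
      intro i _
      calc p i (xh i) ≤ ‖p i (xh i)‖ := le_abs_self _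
        _ ≤ ‖p i‖ * ‖xh i‖ := (p i).le_opNorm _
        _ ≤ ‖p i‖ * ‖xh‖ := by
            gcongr
            exact norm_le_pi_norm xh i
    have hsum : ∑ i, ‖p i‖ * ‖xh‖ = ‖xh‖ := by
      rw [← Finset.sum_mul, hs, one_mul]
    have heq : ∀ i ∈ Finset.univ, p i (xh i) = ‖p i‖ * ‖xh‖ :=
      (Finset.sum_eq_sum_iff_of_le hle).mp (by rw [hsum, hp])
    intro i
    by_cases h0 : p i = 0
    · exact Or.inl h0
    right
    have hpi : p i (xh i) = ‖p i‖ * ‖xh‖ := heq i (Finset.mem_univ i)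
    have hpn : (0:ℝ) < ‖p i‖ := norm_pos_iff.mpr h0
    have hxi : ‖xh i‖ = ‖xh‖ := by
      refine le_antisymm (norm_le_pi_norm xh i) ?_
      have h1 : ‖p i‖ * ‖xh‖ ≤ ‖p i‖ * ‖xh i‖ := by
        rw [← hpi]
        calc p i (xh i) ≤ ‖p i (xh i)‖ := le_abs_self _
          _ ≤ ‖p i‖ * ‖xh i‖ := (p i).le_opNorm _
      exact le_of_mul_le_mul_left h1 hpn
    refine ⟨hxi, ‖p i‖⁻¹ • p i, ⟨?_, ?_⟩, ?_⟩
    · rw [norm_smul, norm_inv, norm_norm, inv_mul_cancel₀ hpn.ne']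
    · show ‖p i‖⁻¹ * p i (xh i) = ‖xh i‖
      rw [hpi, hxi, ← mul_assoc, inv_mul_cancel₀ hpn.ne', one_mul]
    · rw [smul_smul, mul_inv_cancel₀ hpn.ne', one_smul]
  · rintro ⟨hs, h⟩
    refine ⟨hs, ?_⟩
    have : ∀ i, p i (xh i) = ‖p i‖ * ‖xh‖ := by
      intro i
      rcases h i with h0 | ⟨hxi, u, ⟨hu1, hu2⟩, hpu⟩
      · simp [h0]
      · conv_lhs => rw [hpu]
        show ‖p i‖ * u (xh i) = ‖p i‖ * ‖xh‖
        rw [hu2, hxi]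
    rw [Finset.sum_congr rfl fun i _ => this i, ← Finset.sum_mul, hs, one_mul]
end

section
/- Let F : X ⇉ Y be a set-valued mapping between normed spaces, (x̄, ȳ) ∈ gph F, and set Ω₁ = gph F, Ω₂ = X × {ȳ} in X × Y (with max-norm). If F is metrically [q]-subregular at (x̄, ȳ) with constant γ, i.e., γ·d(x, F⁻¹(ȳ)) ≤ d(ȳ, F(x))^q near x̄, then the pair {Ω₁, Ω₂} is metrically [q]-subregular at (x̄, ȳ): there exist γ', δ > 0 such that γ'·d((x,y), Ω₁ ∩ Ω₂) ≤ max(d((x,y), Ω₁), d((x,y), Ω₂))^q for all (x,y) ∈ B_δ(x̄, ȳ); moreover one can take any γ' < γ/(γ + 2^q). -/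
set_option maxHeartbeats 1000000

variable {X Y : Type*} [NormedAddCommGroup X] [NormedSpace ℝ X]
  [NormedAddCommGroup Y] [NormedSpace ℝ Y]

lemma real_rpow_add_le {a b q : ℝ} (ha : 0 ≤ a) (hb : 0 ≤ b) (hq : 0 ≤ q) (hq1 : q ≤ 1) :
    (a + b) ^ q ≤ a ^ q + b ^ q := by
  have h := NNReal.rpow_add_le_add_rpow a.toNNReal b.toNNReal hq hq1
  have h2 := NNReal.coe_le_coe.2 h
  push_cast at h2
  rwa [Real.coe_toNNReal a ha, Real.coe_toNNReal b hb] at h2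

/-- If `F` is metrically `[q]`-subregular at `(x₀, y₀)` with constant `γ`, then the pair
`Ω₁ = gph F`, `Ω₂ = X × {y₀}` is metrically `[q]`-subregular at `(x₀, y₀)`, with any
constant `γ' < γ/(γ + 2^q)`.  Here `X × Y` carries the max-norm, and the distance
`d(y₀, F x)` (possibly to the empty set) is taken in `ℝ≥0∞`. -/
theorem pair_subReg_of_map_subReg (q : ℝ) (hq0 : 0 < q) (hq1 : q ≤ 1)
    (F : X → Set Y) (x₀ : X) (y₀ : Y) (hxy : y₀ ∈ F x₀)
    (γ : ℝ) (hγ : 0 < γ)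
    (hF : ∃ δ > (0:ℝ), ∀ x ∈ Metric.closedBall x₀ δ,
      ENNReal.ofReal (γ * Metric.infDist x {x' : X | y₀ ∈ F x'})
        ≤ (EMetric.infEdist y₀ (F x)) ^ q) :
    ∀ γ' : ℝ, 0 < γ' → γ' < γ / (γ + 2 ^ q) →
      ∃ δ > (0:ℝ), ∀ p ∈ Metric.closedBall (x₀, y₀) δ,
        γ' * Metric.infDist p ({p' : X × Y | p'.2 ∈ F p'.1} ∩ {p' : X × Y | p'.2 = y₀})
          ≤ (max (Metric.infDist p {p' : X × Y | p'.2 ∈ F p'.1})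
                 (Metric.infDist p {p' : X × Y | p'.2 = y₀})) ^ q := by
  obtain ⟨δ, hδ, hsub⟩ := hF
  intro γ' hγ'0 hγ'lt
  set S : Set X := {x' : X | y₀ ∈ F x'} with hS
  set Ω₁ : Set (X × Y) := {p' : X × Y | p'.2 ∈ F p'.1} with hΩ₁
  set Ω₂ : Set (X × Y) := {p' : X × Y | p'.2 = y₀} with hΩ₂
  have hx₀S : x₀ ∈ S := hxy
  have hΩ₁ne : Ω₁.Nonempty := ⟨(x₀, y₀), hxy⟩
  have hSne : S.Nonempty := ⟨x₀, hxy⟩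
  have h2q : (0:ℝ) < 2 ^ q := Real.rpow_pos_of_pos (by norm_num) q
  refine ⟨min (δ/3) (1/2), by positivity, ?_⟩
  rintro ⟨x, y⟩ hp
  simp only [Metric.mem_closedBall] at hp
  set α := Metric.infDist (x, y) Ω₁ with hα
  set β := dist y y₀ with hβ
  have hα0 : 0 ≤ α := Metric.infDist_nonneg
  have hβ0 : 0 ≤ β := dist_nonneg
  have hdist : dist (x, y) (x₀, y₀) = max (dist x x₀) β := Prod.dist_eq
  have hxx₀ : dist x x₀ ≤ min (δ/3) (1/2) :=
    le_trans (le_max_left _ _) (hdist ▸ hp)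
  have hββ : β ≤ min (δ/3) (1/2) :=
    le_trans (le_max_right _ _) (hdist ▸ hp)
  have hαle : α ≤ min (δ/3) (1/2) :=
    le_trans (Metric.infDist_le_dist_of_mem (show (x₀, y₀) ∈ Ω₁ from hxy)) (hdist ▸ hp)
  -- infDist to Ω₂ equals β
  have hβ2 : Metric.infDist (x, y) Ω₂ = β := by
    apply le_antisymm
    · refine le_trans (Metric.infDist_le_dist_of_mem
        (show ((x, y₀) : X × Y) ∈ Ω₂ from rfl)) ?_
      simp [Prod.dist_eq, hβ0, hβ]
    · by_contra h
      push_neg at h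
      obtain ⟨⟨x', y'⟩, hy', hlt⟩ := (Metric.infDist_lt_iff (show Ω₂.Nonempty from ⟨(x, y₀), rfl⟩)).mp h
      have hy'eq : y' = y₀ := hy'
      subst hy'eq
      have hge : β ≤ dist (x, y) (x', y') := by
        rw [Prod.dist_eq]; exact le_max_right _ _
      linarith
  rw [hβ2]
  set m := max α β with hm
  have hm0 : 0 ≤ m := le_trans hα0 (le_max_left _ _)
  have hm1 : m ≤ 1 := by
    apply max_le <;> [exact le_trans hαle (by norm_num); exact le_trans hββ (by norm_num)]
  -- Key: infDist x S ≤ α + γ⁻¹ * (α + β) ^ q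
  have key : Metric.infDist x S ≤ α + γ⁻¹ * (α + β) ^ q := by
    apply le_of_forall_pos_le_add
    intro ε' hε'
    set ε := min (δ/3) (min (ε'/2) ((γ * (ε'/2)) ^ q⁻¹)) with hε
    have hε0 : 0 < ε := by
      apply lt_min (by positivity) (lt_min (by positivity) ?_)
      exact Real.rpow_pos_of_pos (by positivity) _
    obtain ⟨⟨x', y'⟩, hmem, hlt⟩ := (Metric.infDist_lt_iff hΩ₁ne).mp
      (show Metric.infDist (x, y) Ω₁ < α + ε by linarith)
    have hy'F : y' ∈ F x' := hmem
    have hdxx' : dist x x' ≤ α + ε := le_trans (by rw [Prod.dist_eq]; exact le_max_left _ _)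
      hlt.le
    have hdyy' : dist y y' ≤ α + ε := le_trans (by rw [Prod.dist_eq]; exact le_max_right _ _)
      hlt.le
    have hx'ball : x' ∈ Metric.closedBall x₀ δ := by
      rw [Metric.mem_closedBall]
      have h1 : dist x' x₀ ≤ dist x' x + dist x x₀ := dist_triangle _ _ _
      have h2 : dist x' x = dist x x' := dist_comm _ _
      have h3 : α ≤ δ/3 := le_trans hαle (min_le_left _ _)
      have h4 : ε ≤ δ/3 := min_le_left _ _
      have h5 : dist x x₀ ≤ δ/3 := le_trans hxx₀ (min_le_left _ _)
      linarith
    have hsub' := hsub x' hx'ball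
    have hdy₀y' : dist y₀ y' ≤ α + β + ε := by
      have := dist_triangle y₀ y y'
      have h2 : dist y₀ y = β := dist_comm y₀ y ▸ rfl
      linarith
    have hinf : EMetric.infEdist y₀ (F x') ≤ ENNReal.ofReal (α + β + ε) := by
      refine le_trans (EMetric.infEdist_le_edist_of_mem hy'F) ?_
      rw [edist_dist]
      exact ENNReal.ofReal_le_ofReal hdy₀y'
    have hpow : (EMetric.infEdist y₀ (F x')) ^ q ≤ ENNReal.ofReal ((α + β + ε) ^ q) := by
      rw [← ENNReal.ofReal_rpow_of_nonneg (by positivity) hq0.le]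
      exact ENNReal.rpow_le_rpow hinf hq0.le
    have hreal : γ * Metric.infDist x' S ≤ (α + β + ε) ^ q := by
      have := le_trans hsub' hpow
      rwa [ENNReal.ofReal_le_ofReal_iff (by positivity)] at this
    have hx'S : Metric.infDist x' S ≤ γ⁻¹ * (α + β + ε) ^ q := by
      have h := mul_le_mul_of_nonneg_left hreal (inv_nonneg.2 hγ.le)
      rwa [← mul_assoc, inv_mul_cancel₀ hγ.ne', one_mul] at h
    have hsplit : (α + β + ε) ^ q ≤ (α + β) ^ q + ε ^ q :=
      real_rpow_add_le (by positivity) hε0.le hq0.le hq1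
    have hεq : γ⁻¹ * ε ^ q ≤ ε'/2 := by
      have h1 : ε ≤ (γ * (ε'/2)) ^ q⁻¹ := le_trans (min_le_right _ _) (min_le_right _ _)
      have h2 : ε ^ q ≤ ((γ * (ε'/2)) ^ q⁻¹) ^ q := Real.rpow_le_rpow hε0.le h1 hq0.le
      rw [Real.rpow_inv_rpow (by positivity) hq0.ne'] at h2
      rw [inv_mul_le_iff₀ hγ] at *
      nlinarith
    have htri : Metric.infDist x S ≤ Metric.infDist x' S + dist x x' :=
      Metric.infDist_le_infDist_add_dist
    have hεhalf : ε ≤ ε'/2 := le_trans (min_le_right _ _) (min_le_left _ _)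
    have hmono : γ⁻¹ * (α + β + ε) ^ q ≤ γ⁻¹ * ((α + β) ^ q + ε ^ q) := by
      apply mul_le_mul_of_nonneg_left hsplit (by positivity)
    have : γ⁻¹ * ((α + β) ^ q + ε ^ q) = γ⁻¹ * (α + β) ^ q + γ⁻¹ * ε ^ q := by ring
    linarith
  -- m ≤ m ^ q
  have hmq : m ≤ m ^ q := by
    rcases eq_or_lt_of_le hm0 with h | h
    · rw [← h, Real.zero_rpow hq0.ne']
    · calc m = m ^ (1:ℝ) := (Real.rpow_one m).symm
        _ ≤ m ^ q := Real.rpow_le_rpow_of_exponent_ge h hm1 hq1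
  have hmq0 : 0 ≤ m ^ q := Real.rpow_nonneg hm0 q
  -- (α + β) ^ q ≤ 2 ^ q * m ^ q
  have habm : (α + β) ^ q ≤ 2 ^ q * m ^ q := by
    have h1 : α + β ≤ 2 * m := by
      have := le_max_left α β
      have := le_max_right α β
      simp only [← hm] at *
      linarith
    calc (α + β) ^ q ≤ (2 * m) ^ q := Real.rpow_le_rpow (by positivity) h1 hq0.le
      _ = 2 ^ q * m ^ q := Real.mul_rpow (by norm_num) hm0
  -- d(x, S) ≤ (1 + 2^q/γ) m^q
  have hxS : Metric.infDist x S ≤ (1 + 2 ^ q / γ) * m ^ q := by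
    have hαm : α ≤ m := le_max_left _ _
    have : γ⁻¹ * (α + β) ^ q ≤ γ⁻¹ * (2 ^ q * m ^ q) :=
      mul_le_mul_of_nonneg_left habm (by positivity)
    calc Metric.infDist x S ≤ α + γ⁻¹ * (α + β) ^ q := key
      _ ≤ m ^ q + γ⁻¹ * (2 ^ q * m ^ q) := by linarith [le_trans hαm hmq]
      _ = (1 + 2 ^ q / γ) * m ^ q := by field_simp
  -- infDist to intersection ≤ max (infDist x S) β
  have hinter : Metric.infDist (x, y) (Ω₁ ∩ Ω₂) ≤ max (Metric.infDist x S) β := by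
    apply le_of_forall_pos_le_add
    intro t ht
    obtain ⟨x', hx'S, hx'lt⟩ := (Metric.infDist_lt_iff hSne).mp
      (show Metric.infDist x S < Metric.infDist x S + t by linarith)
    have hmemI : (x', y₀) ∈ Ω₁ ∩ Ω₂ := ⟨hx'S, rfl⟩
    calc Metric.infDist (x, y) (Ω₁ ∩ Ω₂) ≤ dist (x, y) (x', y₀) :=
          Metric.infDist_le_dist_of_mem hmemI
      _ = max (dist x x') β := Prod.dist_eq
      _ ≤ max (Metric.infDist x S + t) β := max_le_max hx'lt.le le_rfl
      _ ≤ max (Metric.infDist x S) β + t := by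
          apply max_le <;> [linarith [le_max_left (Metric.infDist x S) β]; linarith [le_max_right (Metric.infDist x S) β]]
  -- conclude
  have hγ'le : γ' * (1 + 2 ^ q / γ) ≤ 1 := by
    have hpos : 0 < γ + 2 ^ q := by linarith
    have h1 : γ' * (γ + 2 ^ q) < γ := by
      rw [lt_div_iff₀ hpos] at hγ'lt; linarith
    have h2 : γ' * (1 + 2 ^ q / γ) = γ' * (γ + 2 ^ q) / γ := by field_simp
    rw [h2, div_le_one hγ]; linarith
  have hβle : β ≤ (1 + 2 ^ q / γ) * m ^ q := by
    have : β ≤ m := le_max_right _ _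
    have h1 : (1:ℝ) ≤ 1 + 2 ^ q / γ := by
      have := div_nonneg h2q.le hγ.le; linarith
    nlinarith [le_trans this hmq]
  have hmaxle : max (Metric.infDist x S) β ≤ (1 + 2 ^ q / γ) * m ^ q := max_le hxS hβle
  calc γ' * Metric.infDist (x, y) (Ω₁ ∩ Ω₂) ≤ γ' * ((1 + 2 ^ q / γ) * m ^ q) := by
        apply mul_le_mul_of_nonneg_left (le_trans hinter hmaxle) hγ'0.le
    _ = (γ' * (1 + 2 ^ q / γ)) * m ^ q := by ring
    _ ≤ 1 * m ^ q := mul_le_mul_of_nonneg_right hγ'le hmq0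
    _ = m ^ q := one_mul _
end

section
/- Let F : X ⇉ Y be a set-valued mapping between normed spaces, (x̄, ȳ) ∈ gph F, Ω₁ = gph F, Ω₂ = X × {ȳ} in X × Y (max-norm). If the pair {Ω₁, Ω₂} is metrically [q]-semiregular at (x̄, ȳ) with constant α (i.e., α·d((x̄,ȳ), (Ω₁ − z₁) ∩ (Ω₂ − z₂)) ≤ max(‖z₁‖,‖z₂‖)^q for all z₁, z₂ in a small ball around 0 of X × Y), then F is metrically [q]-semiregular at (x̄, ȳ): there exist δ > 0 such that 2^q α · d(x̄, F⁻¹(y)) ≤ ‖y − ȳ‖^q for all y ∈ B_δ(ȳ). -/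
variable {X Y : Type*} [NormedAddCommGroup X] [NormedSpace ℝ X]
  [NormedAddCommGroup Y] [NormedSpace ℝ Y]

/-- If the pair `Ω₁ = gph F`, `Ω₂ = X × {y₀}` is metrically `[q]`-semiregular at
`(x₀, y₀)` with constant `α`, then `F` is metrically `[q]`-semiregular at `(x₀, y₀)`
with constant `2^q·α`.  Here `X × Y` carries the max-norm, and distances to possibly
empty sets are taken in `ℝ≥0∞`. -/
theorem map_semiReg_of_pair_semiReg (q : ℝ) (hq0 : 0 < q) (hq1 : q ≤ 1)
    (F : X → Set Y) (x₀ : X) (y₀ : Y) (hxy : y₀ ∈ F x₀)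
    (α : ℝ) (hα : 0 < α)
    (hpair : ∃ δ > (0:ℝ), ∀ z₁ z₂ : X × Y, ‖z₁‖ ≤ δ → ‖z₂‖ ≤ δ →
      ENNReal.ofReal α * EMetric.infEdist ((x₀, y₀) : X × Y)
          {p : X × Y | (p + z₁ ∈ {p' : X × Y | p'.2 ∈ F p'.1}) ∧
                       (p + z₂ ∈ {p' : X × Y | p'.2 = y₀})}
        ≤ ENNReal.ofReal ((max ‖z₁‖ ‖z₂‖) ^ q)) :
    ∃ δ > (0:ℝ), ∀ y ∈ Metric.closedBall y₀ δ,
      ENNReal.ofReal (2 ^ q * α) * EMetric.infEdist x₀ {x : X | y ∈ F x}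
        ≤ ENNReal.ofReal (‖y - y₀‖ ^ q) := by
  obtain ⟨δ, hδ, h⟩ := hpair
  refine ⟨δ, hδ, fun y hy => ?_⟩
  have hy' : ‖y - y₀‖ ≤ δ := by
    simpa [dist_eq_norm] using hy
  set z : Y := (1/2 : ℝ) • (y - y₀) with hz
  have hzn : ‖z‖ = ‖y - y₀‖ / 2 := by
    rw [hz, norm_smul]
    simp [Real.norm_eq_abs]
    ring
  have hz1 : ‖((0, z) : X × Y)‖ = ‖z‖ := by
    simp [Prod.norm_def, norm_nonneg]
  have hz2 : ‖((0, -z) : X × Y)‖ = ‖z‖ := by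
    simp [Prod.norm_def, norm_nonneg]
  have hzδ : ‖z‖ ≤ δ := by
    rw [hzn]; linarith [norm_nonneg (y - y₀)]
  have key := h (0, z) (0, -z) (by rw [hz1]; exact hzδ) (by rw [hz2]; exact hzδ)
  rw [hz1, hz2, max_self] at key
  -- infEdist comparison
  set S : Set (X × Y) := {p : X × Y | (p + (0, z) ∈ {p' : X × Y | p'.2 ∈ F p'.1}) ∧
                       (p + (0, -z) ∈ {p' : X × Y | p'.2 = y₀})} with hS
  have hcomp : EMetric.infEdist x₀ {x : X | y ∈ F x}
      ≤ EMetric.infEdist ((x₀, y₀) : X × Y) S := by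
    refine Metric.le_infEDist.2 ?_
    intro p hp
    obtain ⟨hp1, hp2⟩ := hp
    simp only [Set.mem_setOf_eq, Prod.fst_add, Prod.snd_add] at hp1 hp2
    have hp2' : p.2 = y₀ + z := by
      have : p.2 + -z = y₀ := hp2
      linear_combination (norm := abel) this
    have hyp : y ∈ F p.1 := by
      have hzz : z + z = y - y₀ := by
        rw [hz, ← add_smul]; norm_num
      have : p.2 + z = y := by
        rw [hp2']
        have : y₀ + z + z = y := by
          rw [add_assoc, hzz]; abel
        exact this
      simpa [this] using hp1
    calc EMetric.infEdist x₀ {x : X | y ∈ F x} ≤ edist x₀ p.1 :=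
          EMetric.infEdist_le_edist_of_mem hyp
      _ ≤ edist ((x₀, y₀) : X × Y) p := by
          rw [Prod.edist_eq]; exact le_max_left _ _
  -- final computation
  have h2q : (0:ℝ) ≤ 2 ^ q := Real.rpow_nonneg (by norm_num) q
  calc ENNReal.ofReal (2 ^ q * α) * EMetric.infEdist x₀ {x : X | y ∈ F x}
      = ENNReal.ofReal (2 ^ q) * (ENNReal.ofReal α * EMetric.infEdist x₀ {x : X | y ∈ F x}) := by
        rw [← mul_assoc, ← ENNReal.ofReal_mul h2q]
    _ ≤ ENNReal.ofReal (2 ^ q) * (ENNReal.ofReal α * EMetric.infEdist ((x₀, y₀) : X × Y) S) := by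
        gcongr
    _ ≤ ENNReal.ofReal (2 ^ q) * ENNReal.ofReal (‖z‖ ^ q) := by
        gcongr
    _ = ENNReal.ofReal (2 ^ q * ‖z‖ ^ q) := by
        rw [← ENNReal.ofReal_mul h2q]
    _ = ENNReal.ofReal (‖y - y₀‖ ^ q) := by
        congr 1
        rw [← Real.mul_rpow (by norm_num) (norm_nonneg z), hzn]
        congr 1
        ring
end
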